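/- Let Ω = (a, b) be a bounded open interval in ℝ. Let u : ℝ → ℝ be twice differentiable with ∫_Ω u(t)² dt < ∞, ∫_Ω u'(t)² dt < ∞, and ∫_Ω u''(t)² dt < ∞. Let f : ℝ → ℝ be twice differentiable, q-Lipschitz continuous, and satisfy |f''(t)| ≤ ν for all t ∈ ℝ. Then ∫_Ω (f(u(t)))² dt < ∞, ∫_Ω ((f∘u)'(t))² dt < ∞, and ∫_Ω ((f∘u)''(t))² dt < ∞; that is, the composition f∘u lies in the Sobolev space W^{2,2}(Ω). -/

import Mathlib

open MeasureTheory Set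

/-- If `u : ℝ → ℝ` is twice differentiable with `u², (u')², (u'')²` integrable on the
bounded open interval `Ω = (a, b)`, and `f : ℝ → ℝ` is twice differentiable, `q`-Lipschitz with
`|f''| ≤ ν` everywhere, then `(f∘u)², ((f∘u)')², ((f∘u)'')²` are integrable on `Ω`, i.e.
`f ∘ u ∈ W^{2,2}(Ω)`. -/
theorem stmt1 (a b : ℝ) (hab : a < b)
    (u : ℝ → ℝ) (hu : Differentiable ℝ u) (hu' : Differentiable ℝ (deriv u))
    (hu0 : IntegrableOn (fun t => u t ^ 2) (Ioo a b))
    (hu1 : IntegrableOn (fun t => deriv u t ^ 2) (Ioo a b))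
    (hu2 : IntegrableOn (fun t => deriv (deriv u) t ^ 2) (Ioo a b))
    (f : ℝ → ℝ) (hfd : Differentiable ℝ f) (hfd' : Differentiable ℝ (deriv f))
    (q ν : ℝ) (hf : ∀ s t : ℝ, |f s - f t| ≤ q * |s - t|)
    (hf'' : ∀ t : ℝ, |deriv (deriv f) t| ≤ ν) :
    IntegrableOn (fun t => (f (u t)) ^ 2) (Ioo a b) ∧
    IntegrableOn (fun t => deriv (f ∘ u) t ^ 2) (Ioo a b) ∧
    IntegrableOn (fun t => deriv (deriv (f ∘ u)) t ^ 2) (Ioo a b) := by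
  have hucont : Continuous u := hu.continuous
  have hu'cont : Continuous (deriv u) := hu'.continuous
  have hfcont : Continuous f := hfd.continuous
  have hf'cont : Continuous (deriv f) := hfd'.continuous
  -- first derivative formula
  have hD1 : deriv (f ∘ u) = fun t => deriv f (u t) * deriv u t := by
    funext t
    exact ((hfd (u t)).hasDerivAt.comp t (hu t).hasDerivAt).deriv
  -- second derivative formula
  have hD2 : deriv (deriv (f ∘ u)) = fun t =>
      deriv (deriv f) (u t) * deriv u t * deriv u t + deriv f (u t) * deriv (deriv u) t := by
    funext t
    rw [hD1]
    have h1 : HasDerivAt (fun s => deriv f (u s)) (deriv (deriv f) (u t) * deriv u t) t :=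
      (hfd' (u t)).hasDerivAt.comp t (hu t).hasDerivAt
    have h2 : HasDerivAt (fun s => deriv f (u s) * deriv u s)
        (deriv (deriv f) (u t) * deriv u t * deriv u t + deriv f (u t) * deriv (deriv u) t) t :=
      h1.mul (hu' t).hasDerivAt
    exact h2.deriv
  -- subset of compact
  have hsub : Ioo a b ⊆ Icc a b := Ioo_subset_Icc_self
  -- part 1
  have P1 : IntegrableOn (fun t => (f (u t)) ^ 2) (Ioo a b) := by
    refine (ContinuousOn.integrableOn_compact isCompact_Icc ?_).mono_set hsub
    exact ((hfcont.comp hucont).pow 2).continuousOn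
  -- part 2
  have P2 : IntegrableOn (fun t => deriv (f ∘ u) t ^ 2) (Ioo a b) := by
    rw [hD1]
    refine (ContinuousOn.integrableOn_compact isCompact_Icc ?_).mono_set hsub
    exact (((hf'cont.comp hucont).mul hu'cont).pow 2).continuousOn
  -- bound for deriv f
  have hq : 0 ≤ q := by
    have := hf 0 1
    have h01 : |(0:ℝ) - 1| = 1 := by norm_num
    rw [h01, mul_one] at this
    exact le_trans (abs_nonneg _) this
  have lip : LipschitzWith ⟨q, hq⟩ f := by
    refine LipschitzWith.of_dist_le_mul fun s t => ?_
    rw [Real.dist_eq, Real.dist_eq]; exact hf s t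
  have hf' : ∀ x, |deriv f x| ≤ q := by
    intro x
    have := (hfd x).hasDerivAt.le_of_lip' hq (by
      filter_upwards with y
      simpa [Real.norm_eq_abs] using hf y x)
    simpa [Real.norm_eq_abs] using this
  have hν : 0 ≤ ν := le_trans (abs_nonneg _) (hf'' 0)
  -- bound for u' on Icc
  obtain ⟨M, hM⟩ : ∃ M, ∀ t ∈ Icc a b, |deriv u t| ≤ M := by
    obtain ⟨M, hM⟩ := isCompact_Icc.exists_bound_of_continuousOn (f := deriv u)
      hu'cont.continuousOn
    exact ⟨M, fun t ht => by simpa [Real.norm_eq_abs] using hM t ht⟩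
  have hM0 : 0 ≤ M := le_trans (abs_nonneg _) (hM a ⟨le_refl a, le_of_lt hab⟩)
  -- part 3
  have P3 : IntegrableOn (fun t => deriv (deriv (f ∘ u)) t ^ 2) (Ioo a b) := by
    rw [hD2]
    have hmeas : AEStronglyMeasurable
        (fun t => (deriv (deriv f) (u t) * deriv u t * deriv u t
          + deriv f (u t) * deriv (deriv u) t) ^ 2)
        (volume.restrict (Ioo a b)) := by
      apply Measurable.aestronglyMeasurable
      exact ((((measurable_deriv (deriv f)).comp hucont.measurable).mul
        hu'cont.measurable).mul hu'cont.measurable |>.add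
        ((hf'cont.measurable.comp hucont.measurable).mul
          (measurable_deriv (deriv u)))).pow_const 2
    have hg : IntegrableOn
        (fun t => 2 * ((ν * (M * M)) ^ 2 + q ^ 2 * deriv (deriv u) t ^ 2)) (Ioo a b) := by
      apply Integrable.const_mul
      exact (integrableOn_const measure_Ioo_lt_top.ne).add (hu2.const_mul _)
    refine hg.mono' hmeas ?_
    filter_upwards [ae_restrict_mem measurableSet_Ioo] with t ht
    have hA : |deriv (deriv f) (u t) * deriv u t * deriv u t| ≤ ν * (M * M) := by
      rw [abs_mul, abs_mul]
      have h1 := hf'' (u t)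
      have h2 := hM t (hsub ht)
      have := mul_le_mul (mul_le_mul h1 h2 (abs_nonneg _) hν) h2 (abs_nonneg _)
        (mul_nonneg hν hM0)
      linarith [this]
    have hB : |deriv f (u t) * deriv (deriv u) t| ≤ q * |deriv (deriv u) t| :=
      (abs_mul _ _).le.trans (mul_le_mul_of_nonneg_right (hf' _) (abs_nonneg _))
    have key : (deriv (deriv f) (u t) * deriv u t * deriv u t
        + deriv f (u t) * deriv (deriv u) t) ^ 2
        ≤ 2 * ((ν * (M * M)) ^ 2 + q ^ 2 * deriv (deriv u) t ^ 2) := by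
      set A := deriv (deriv f) (u t) * deriv u t * deriv u t
      set B := deriv f (u t) * deriv (deriv u) t
      have h1 : (A + B) ^ 2 ≤ 2 * (A ^ 2 + B ^ 2) := by nlinarith [sq_nonneg (A - B)]
      have h2 : A ^ 2 ≤ (ν * (M * M)) ^ 2 := by
        rw [← sq_abs A]; exact pow_le_pow_left₀ (abs_nonneg _) hA 2
      have h3 : B ^ 2 ≤ q ^ 2 * deriv (deriv u) t ^ 2 := by
        have := pow_le_pow_left₀ (abs_nonneg B) hB 2
        rw [sq_abs] at this
        calc B ^ 2 ≤ (q * |deriv (deriv u) t|) ^ 2 := this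
          _ = q ^ 2 * deriv (deriv u) t ^ 2 := by rw [mul_pow, sq_abs]
      linarith
    calc ‖(deriv (deriv f) (u t) * deriv u t * deriv u t
          + deriv f (u t) * deriv (deriv u) t) ^ 2‖
        = (deriv (deriv f) (u t) * deriv u t * deriv u t
          + deriv f (u t) * deriv (deriv u) t) ^ 2 := by
          rw [Real.norm_eq_abs, abs_of_nonneg (sq_nonneg _)]
      _ ≤ 2 * ((ν * (M * M)) ^ 2 + q ^ 2 * deriv (deriv u) t ^ 2) := key
  exact ⟨P1, P2, P3⟩
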